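/- Monotonicity of until robustness before the witness: if the smallest witness time of ρ_{[q U r]} along x_{0:∞} is strictly positive, then ρ_{[q U r]}(x_{0:∞}) ≤ ρ_{[q U r]}(x_{1:∞}). -/
import Mathlib


variable {X A : Type*}

/-- Suffix (time shift) of an infinite trajectory. -/
def shift (x : ℕ → X) (t : ℕ) : ℕ → X := fun n => x (n + t)

/-- The candidate term at witness time `t` in the quantitative semantics of `q U r`:
`min (r (x_{t:∞}), min_{0 ≤ k < t} q (x_k))` (empty min is `⊤`). -/
noncomputable def untilTerm (q : X → EReal) (r : (ℕ → X) → EReal) (x : ℕ → X) (t : ℕ) : EReal :=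
  min (r (shift x t)) (⨅ k : Fin t, q (x k))

/-- Robustness of `q U r` on an infinite trajectory. -/
noncomputable def untilRob (q : X → EReal) (r : (ℕ → X) → EReal) (x : ℕ → X) : EReal :=
  ⨆ t : ℕ, untilTerm q r x t

/-- Robustness of the finite-horizon until `q U_{[0,n]} r`. -/
noncomputable def finUntil (q : X → EReal) (r : (ℕ → X) → EReal) (n : ℕ) (x : ℕ → X) : EReal :=
  ⨆ t ∈ Finset.range (n + 1), untilTerm q r x t

theorem untilRob_mono_before_witness (q : X → EReal) (r : (ℕ → X) → EReal) (x : ℕ → X)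
    (hex : ∃ τ : ℕ, untilRob q r x = untilTerm q r x τ)
    (hpos : ∀ t : ℕ, untilRob q r x = untilTerm q r x t → 0 < t) :
    untilRob q r x ≤ untilRob q r (shift x 1) := by
  obtain ⟨τ, hτ⟩ := hex
  have hp := hpos τ hτ
  obtain ⟨s, rfl⟩ : ∃ s, τ = s + 1 := ⟨τ - 1, (Nat.succ_pred_eq_of_pos hp).symm⟩
  rw [hτ]
  have hsh : shift (shift x 1) s = shift x (s + 1) := by
    funext n; simp [shift, Nat.add_assoc]
  have hkey : untilTerm q r x (s + 1) ≤ untilTerm q r (shift x 1) s := by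
    unfold untilTerm
    rw [hsh]
    apply min_le_min le_rfl
    apply le_iInf
    intro k
    exact iInf_le_of_le ⟨k + 1, by omega⟩ (by simp [shift])
  exact hkey.trans (le_iSup (fun t => untilTerm q r (shift x 1) t) s)
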